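/- Let n be a positive integer and t : Fin 2^n → Bool. In EuclideanSpace ℂ (Fin 2^n × Bool), define v by v(i,b) = 2^{-n/2} if b = t(i) and 0 otherwise, and let P be the orthogonal projection onto the span of the basis vectors e_{(i,true)}. Let r be the cardinality of {i : Fin 2^n | t(i) = true}. Then ‖Pv‖² = r/2^n. -/
import Mathlib


/-- In the OM quantum SAT algorithm, `‖P v‖² = r/2^n` where `r` is the number of
satisfying truth assignments. -/
theorem sat_projection_norm_sq (n : ℕ) (hn : 0 < n) (t : Fin (2 ^ n) → Bool)
    (v Pv : EuclideanSpace ℂ (Fin (2 ^ n) × Bool))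
    (hv : ∀ i b, v (i, b) = if b = t i then ((Real.sqrt (2 ^ n) : ℝ) : ℂ)⁻¹ else 0)
    (hPv : ∀ i, Pv (i, true) = v (i, true) ∧ Pv (i, false) = 0)
    (r : ℕ) (hr : r = (Finset.univ.filter fun i => t i = true).card) :
    ‖Pv‖ ^ 2 = (r : ℝ) / 2 ^ n := by
  have hpos : (0:ℝ) < 2 ^ n := by positivity
  have hsq : ‖Pv‖ ^ 2 = ∑ p : Fin (2 ^ n) × Bool, ‖Pv p‖ ^ 2 := by
    rw [EuclideanSpace.norm_eq, Real.sq_sqrt]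
    positivity
  rw [hsq, Fintype.sum_prod_type]
  have : ∀ i : Fin (2 ^ n), ∑ b : Bool, ‖Pv (i, b)‖ ^ 2
      = if t i = true then 1 / 2 ^ n else 0 := by
    intro i
    rw [Fintype.sum_bool, (hPv i).1, (hPv i).2, hv]
    by_cases h : t i = true
    · simp [h, norm_inv, Complex.norm_real, Real.sqrt_nonneg, abs_of_nonneg (Real.sqrt_nonneg _), Real.sq_sqrt hpos.le,
        one_div]
    · simp [h]
  rw [Finset.sum_congr rfl (fun i _ => this i), Finset.sum_filter (fun i => t i = true) (fun _ => (1:ℝ)/2^n) |>.symm,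
    Finset.sum_const, hr, nsmul_eq_mul]
  ring
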